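/- Let X be a category with pushouts and colimits of ℕ-indexed chains, let F, G : X ⥤ X be endofunctors such that G preserves colimits of ℕ-indexed chains, and let α : F ⟶ G be a natural transformation. Then the restriction functor α* : Alg(G) ⥤ Alg(F) admits a left adjoint. -/

import Mathlib

open CategoryTheory CategoryTheory.Limits CategoryTheory.Endofunctor

universe v₁ u₁

namespace FreeAlgAux

variable {X : Type u₁} [Category.{v₁} X]
  [HasPushouts X] [HasColimitsOfShape ℕ X]
  (F G : X ⥤ X) [PreservesColimitsOfShape ℕ G] (α : F ⟶ G)

/-- One step of the chain: an object, its successor, the connecting map and the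
partial structure map. -/
structure Step where
  X0 : X
  X1 : X
  x : X0 ⟶ X1
  ζ : G.obj X0 ⟶ X1

variable {F} (A : Algebra F)

/-- The recursively defined chain of steps. -/
noncomputable def step : ℕ → Step G
  | 0 => ⟨A.a, pushout A.str (α.app A.a), pushout.inl _ _, pushout.inr _ _⟩
  | n + 1 =>
      let s := step n
      ⟨s.X1, pushout s.ζ (G.map s.x), pushout.inl _ _, pushout.inr _ _⟩

/-- The objects of the chain. -/
noncomputable def Xn (n : ℕ) : X := (step G α A n).X0

/-- The connecting maps of the chain. -/
noncomputable def xmap (n : ℕ) : Xn G α A n ⟶ Xn G α A (n + 1) := (step G α A n).x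

/-- The partial structure maps. -/
noncomputable def zeta (n : ℕ) : G.obj (Xn G α A n) ⟶ Xn G α A (n + 1) := (step G α A n).ζ

lemma base_comm : A.str ≫ xmap G α A 0 = α.app (Xn G α A 0) ≫ zeta G α A 0 :=
  pushout.condition

lemma succ_comm (n : ℕ) :
    zeta G α A n ≫ xmap G α A (n + 1) = G.map (xmap G α A n) ≫ zeta G α A (n + 1) :=
  pushout.condition (f := zeta G α A n) (g := G.map (xmap G α A n))

/-- The chain as a functor `ℕ ⥤ X`. -/
noncomputable def chain : ℕ ⥤ X := Functor.ofSequence (xmap G α A)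

/-- The colimit of the chain. -/
noncomputable def Xinf : X := colimit (chain G α A)

/-- Colimit injections. -/
noncomputable def ι (n : ℕ) : Xn G α A n ⟶ Xinf G α A := colimit.ι (chain G α A) n

lemma xmap_ι (n : ℕ) : xmap G α A n ≫ ι G α A (n + 1) = ι G α A n := by
  have := colimit.w (chain G α A) (homOfLE (Nat.le_add_right n 1))
  simp only [chain, ι] at this ⊢
  erw [Functor.ofSequence_map_homOfLE_succ] at this
  exact this

/-- `G` maps the colimit cocone to a colimit cocone. -/
noncomputable def hc : IsColimit (G.mapCocone (colimit.cocone (chain G α A))) :=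
  isColimitOfPreserves G (colimit.isColimit (chain G α A))

/-- The cocone over `chain ⋙ G` with point `Xinf` given by the `zeta` maps. -/
noncomputable def zetaCocone : Cocone (chain G α A ⋙ G) where
  pt := Xinf G α A
  ι := NatTrans.ofSequence (F := chain G α A ⋙ G)
    (G := (Functor.const ℕ).obj (Xinf G α A))
    (fun n => zeta G α A n ≫ ι G α A (n + 1))
    (fun n => by
      dsimp [chain]
      erw [Category.comp_id, Functor.ofSequence_map_homOfLE_succ,
        ← Category.assoc, ← succ_comm, Category.assoc, xmap_ι])

/-- The structure map on the colimit. -/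
noncomputable def ξ : G.obj (Xinf G α A) ⟶ Xinf G α A :=
  (hc G α A).desc (zetaCocone G α A)

lemma ι_ξ (n : ℕ) :
    G.map (ι G α A n) ≫ ξ G α A = zeta G α A n ≫ ι G α A (n + 1) :=
  (hc G α A).fac (zetaCocone G α A) n

/-- The free `G`-algebra on `A`. -/
noncomputable def freeAlg : Algebra G := ⟨Xinf G α A, ξ G α A⟩

lemma eta_comm :
    F.map (ι G α A 0) ≫ α.app (Xinf G α A) ≫ ξ G α A = A.str ≫ ι G α A 0 := by
  erw [← Category.assoc, α.naturality, Category.assoc, ι_ξ, ← Category.assoc,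
    ← base_comm, Category.assoc, xmap_ι]
  rfl

/-- The unit morphism of `F`-algebras. -/
noncomputable def etaHom : A ⟶ (Algebra.functorOfNatTrans α).obj (freeAlg G α A) where
  f := ι G α A 0
  h := eta_comm G α A

section Desc

variable {B : Algebra G} (g : A ⟶ (Algebra.functorOfNatTrans α).obj B)

lemma g_comm : A.str ≫ g.f = α.app A.a ≫ G.map g.f ≫ B.str := by
  have := g.h
  dsimp [Algebra.functorOfNatTrans] at this
  erw [← this, ← Category.assoc, α.naturality, Category.assoc]
  rfl

/-- The recursively defined maps out of the chain, with their invariants. -/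
noncomputable def gaux : ∀ n : ℕ,
    { p : (Xn G α A n ⟶ B.a) × (Xn G α A (n + 1) ⟶ B.a) //
      xmap G α A n ≫ p.2 = p.1 ∧ zeta G α A n ≫ p.2 = G.map p.1 ≫ B.str }
  | 0 =>
      ⟨(g.f, pushout.desc g.f (G.map g.f ≫ B.str) (g_comm G α A g)),
        pushout.inl_desc _ _ _, pushout.inr_desc _ _ _⟩
  | n + 1 =>
      ⟨((gaux n).1.2,
        pushout.desc (gaux n).1.2 (G.map (gaux n).1.2 ≫ B.str)
          (by
            show zeta G α A n ≫ _ = G.map (xmap G α A n) ≫ _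
            erw [(gaux n).2.2, ← Category.assoc, ← G.map_comp, (gaux n).2.1])),
        pushout.inl_desc _ _ _, pushout.inr_desc _ _ _⟩

/-- The maps out of the chain. -/
noncomputable def gseq (n : ℕ) : Xn G α A n ⟶ B.a := (gaux G α A g n).1.1

lemma gseq_comm1 (n : ℕ) :
    xmap G α A n ≫ gseq G α A g (n + 1) = gseq G α A g n := by
  have : gseq G α A g (n + 1) = (gaux G α A g n).1.2 := by
    rw [gseq, gaux.eq_def]
  rw [this]
  exact (gaux G α A g n).2.1

lemma gseq_comm2 (n : ℕ) :
    zeta G α A n ≫ gseq G α A g (n + 1) = G.map (gseq G α A g n) ≫ B.str := by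
  have : gseq G α A g (n + 1) = (gaux G α A g n).1.2 := by
    rw [gseq, gaux.eq_def]
  rw [this]
  exact (gaux G α A g n).2.2

lemma gseq_zero : gseq G α A g 0 = g.f := rfl

/-- The induced map out of the colimit. -/
noncomputable def gInf : Xinf G α A ⟶ B.a :=
  colimit.desc (chain G α A)
    { pt := B.a
      ι := NatTrans.ofSequence (F := chain G α A)
        (G := (Functor.const ℕ).obj B.a) (fun n => gseq G α A g n)
        (fun n => by
          dsimp [chain]
          erw [Category.comp_id, Functor.ofSequence_map_homOfLE_succ]
          exact gseq_comm1 G α A g n) }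

lemma ι_gInf (n : ℕ) : ι G α A n ≫ gInf G α A g = gseq G α A g n :=
  colimit.ι_desc _ n

lemma gInf_alg : G.map (gInf G α A g) ≫ B.str = ξ G α A ≫ gInf G α A g := by
  apply (hc G α A).hom_ext
  intro n
  have h1 : (G.mapCocone (colimit.cocone (chain G α A))).ι.app n = G.map (ι G α A n) := rfl
  erw [h1, ← Category.assoc, ← G.map_comp, ι_gInf, ← Category.assoc, ι_ξ,
    Category.assoc, ι_gInf, gseq_comm2]
  rfl

/-- The induced morphism of `G`-algebras. -/
noncomputable def gInfHom : freeAlg G α A ⟶ B where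
  f := gInf G α A g
  h := gInf_alg G α A g

lemma gInf_unique (h : freeAlg G α A ⟶ B) (hh : ι G α A 0 ≫ h.f = g.f) :
    h.f = gInf G α A g := by
  have key : ∀ n, ι G α A n ≫ h.f = gseq G α A g n := by
    intro n
    induction n with
    | zero => exact hh.trans (gseq_zero G α A g).symm
    | succ n ih =>
        have halg : ξ G α A ≫ h.f = G.map h.f ≫ B.str := h.h.symm
        match n with
        | 0 =>
            apply pushout.hom_ext
            · show xmap G α A 0 ≫ ι G α A 1 ≫ h.f = xmap G α A 0 ≫ gseq G α A g 1
              erw [← Category.assoc, xmap_ι, ih, gseq_comm1]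
            · show zeta G α A 0 ≫ ι G α A 1 ≫ h.f = zeta G α A 0 ≫ gseq G α A g 1
              erw [← Category.assoc, ← ι_ξ, Category.assoc, halg, ← Category.assoc,
                ← G.map_comp, ih, gseq_comm2]
        | m + 1 =>
            apply pushout.hom_ext
            · show xmap G α A (m + 1) ≫ ι G α A (m + 2) ≫ h.f =
                xmap G α A (m + 1) ≫ gseq G α A g (m + 2)
              erw [← Category.assoc, xmap_ι, ih, gseq_comm1]
            · show zeta G α A (m + 1) ≫ ι G α A (m + 2) ≫ h.f =
                zeta G α A (m + 1) ≫ gseq G α A g (m + 2)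
              erw [← Category.assoc, ← ι_ξ, Category.assoc, halg, ← Category.assoc,
                ← G.map_comp, ih, gseq_comm2]
  apply colimit.hom_ext
  intro n
  exact (key n).trans (ι_gInf G α A g n).symm

end Desc

/-- The free algebra is an initial object of the structured arrow category. -/
noncomputable def isInitial :
    IsInitial (StructuredArrow.mk (etaHom G α A) :
      StructuredArrow A (Algebra.functorOfNatTrans α)) := by
  apply IsInitial.ofUniqueHom
    (fun B => StructuredArrow.homMk (gInfHom G α A B.hom)
      (by
        ext
        dsimp [etaHom, gInfHom, Algebra.functorOfNatTrans]
        exact (ι_gInf G α A B.hom 0).trans (gseq_zero G α A B.hom)))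
  · intro B m
    ext : 1
    apply Algebra.Hom.ext
    apply gInf_unique
    have := m.w
    dsimp at this
    have := congrArg Algebra.Hom.f this
    dsimp [etaHom, Algebra.functorOfNatTrans] at this
    exact this

end FreeAlgAux

/-- Let `X` be a category with pushouts and colimits of `ℕ`-indexed chains,
let `F, G : X ⥤ X` be endofunctors such that `G` preserves colimits of `ℕ`-indexed chains,
and let `α : F ⟶ G` be a natural transformation.  Then the restriction functor
`α* : Alg(G) ⥤ Alg(F)` admits a left adjoint. -/
theorem endofunctor_restriction_has_left_adjoint
    {X : Type u₁} [Category.{v₁} X]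
    [HasPushouts X] [HasColimitsOfShape ℕ X]
    (F G : X ⥤ X) [PreservesColimitsOfShape ℕ G] (α : F ⟶ G) :
    ∃ L : Algebra F ⥤ Algebra G,
      Nonempty (L ⊣ Algebra.functorOfNatTrans α) := by
  have : ∀ A : Algebra F, HasInitial (StructuredArrow A (Algebra.functorOfNatTrans α)) :=
    fun A => (FreeAlgAux.isInitial G α A).hasInitial
  exact ⟨_, ⟨adjunctionOfStructuredArrowInitials (Algebra.functorOfNatTrans α)⟩⟩
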